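/- Let a discrete group G act by homeomorphisms α on a locally compact Hausdorff space X. The induced action σ on C₀(X) (given by σ_g(f) = f ∘ α_g⁻¹) is G-separating if and only if the action α is topologically G-separating, i.e., for all open U₁, U₂ ⊆ X and compact K₁ ⊆ U₁, K₂ ⊆ U₂ there exist g₁, g₂ ∈ G with α_{g₁}(K₁) ⊆ U₁, α_{g₂}(K₂) ⊆ U₂, and α_{g₁}(K₁) ∩ α_{g₂}(K₂) = ∅. -/

import Mathlib

open scoped ComplexOrder
open Set Filter Topology

section Stmt4Aux

variable {X : Type*} [TopologicalSpace X] [LocallyCompactSpace X] [T2Space X]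

lemma c0_norm_le (f : ZeroAtInftyContinuousMap X ℂ) {C : ℝ} (hC : 0 ≤ C)
    (h : ∀ x, ‖f x‖ ≤ C) : ‖f‖ ≤ C := by
  rw [← ZeroAtInftyContinuousMap.norm_toBCF_eq_norm]
  exact (BoundedContinuousFunction.norm_le hC).2 h

noncomputable def ofCS (f : X → ℝ) (hf : Continuous f) (h : HasCompactSupport f) :
    ZeroAtInftyContinuousMap X ℂ where
  toFun := Complex.ofReal ∘ f
  continuous_toFun := Complex.continuous_ofReal.comp hf
  zero_at_infty' := (h.comp_left Complex.ofReal_zero).is_zero_at_infty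

@[simp] lemma ofCS_apply (f : X → ℝ) (hf : Continuous f) (h : HasCompactSupport f) (x : X) :
    ofCS f hf h x = (f x : ℂ) := rfl

lemma isCompact_superlevel (f : ZeroAtInftyContinuousMap X ℂ) {δ : ℝ} (hδ : 0 < δ) :
    IsCompact {x | δ ≤ (f x).re} := by
  have h0 : Tendsto f (cocompact X) (𝓝 0) := ZeroAtInftyContinuousMapClass.zero_at_infty f
  have hb : ⇑f ⁻¹' Metric.ball 0 δ ∈ cocompact X := h0 (Metric.ball_mem_nhds 0 hδ)
  obtain ⟨K, hKc, hK⟩ := (hasBasis_cocompact.mem_iff).1 hb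
  refine hKc.of_isClosed_subset (isClosed_le continuous_const
    (Complex.continuous_re.comp (map_continuous f))) fun x hx => ?_
  by_contra hxK
  have h1 : f x ∈ Metric.ball (0:ℂ) δ := hK hxK
  rw [Metric.mem_ball, dist_zero_right] at h1
  have h2 : (f x).re ≤ ‖f x‖ := by
    exact (le_abs_self _).trans (Complex.abs_re_le_norm _)
  exact absurd hx (not_le.2 (h2.trans_lt h1))

lemma exists_d (a : ZeroAtInftyContinuousMap X ℂ) (ha : ∀ x, 0 ≤ a x) {ε : ℝ} (hε : 0 < ε)
    (T : X ≃ₜ X) (W : Set X) (hW : IsOpen W)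
    (him : T '' {x | ε/2 ≤ (a x).re} ⊆ W ∩ {x | 0 < (a x).re}) :
    ∃ d : ZeroAtInftyContinuousMap X ℂ,
      (∀ x, d x ≠ 0 → x ∈ W) ∧
      ‖star d * a * d - a.comp T.symm.toCocompactMap‖ < ε := by
  have haim : ∀ x, (a x).im = 0 := fun x => ((Complex.nonneg_iff.1 (ha x)).2).symm
  have hare : ∀ x, 0 ≤ (a x).re := fun x => (Complex.nonneg_iff.1 (ha x)).1
  have haeq : ∀ x, a x = ((a x).re : ℂ) := fun x => by
    apply Complex.ext <;> simp [haim x]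
  set K : Set X := {x | ε/2 ≤ (a x).re} with hKdef
  set U : Set X := {x | 0 < (a x).re} with hUdef
  have hUopen : IsOpen U := isOpen_lt continuous_const
    (Complex.continuous_re.comp (map_continuous a))
  have hKcomp : IsCompact K := isCompact_superlevel a (half_pos hε)
  have hAcomp : IsCompact (T '' K) := hKcomp.image T.continuous
  obtain ⟨L, hLcomp, hAint, hLsub⟩ := exists_compact_between hAcomp (hW.inter hUopen) him
  obtain ⟨φ, hφA, hφt, hφc, hφ01⟩ := exists_continuous_one_zero_of_isCompact hAcomp
    isOpen_interior.isClosed_compl (disjoint_compl_right_iff_subset.mpr hAint)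
  have hφsupp : ∀ x, φ x ≠ 0 → x ∈ interior L := fun x hx => by
    by_contra h; exact hx (hφt h)
  set ψ : X → ℝ := fun x => φ x * Real.sqrt ((a (T.symm x)).re / (a x).re) with hψdef
  have hψcont : Continuous ψ := by
    rw [continuous_iff_continuousAt]
    intro x
    by_cases hx : 0 < (a x).re
    · exact ((map_continuous φ).continuousAt).mul
        (Real.continuous_sqrt.continuousAt.comp
          (((Complex.continuous_re.comp ((map_continuous a).comp T.symm.continuous)).continuousAt).div
            ((Complex.continuous_re.comp (map_continuous a)).continuousAt) hx.ne'))
    · have hxL : x ∉ L := fun h => hx (hLsub h).2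
      have : ψ =ᶠ[𝓝 x] fun _ => 0 := by
        filter_upwards [hLcomp.isClosed.isOpen_compl.mem_nhds hxL] with y hy
        have : φ y = 0 := hφt (fun h => hy (interior_subset h))
        simp [hψdef, this]
      exact this.continuousAt
  have hψsupp : HasCompactSupport ψ := HasCompactSupport.intro hLcomp fun x hx => by
    have : φ x = 0 := hφt fun h => hx (interior_subset h)
    simp [hψdef, this]
  refine ⟨ofCS ψ hψcont hψsupp, fun x hx => ?_, ?_⟩
  · have hφx : φ x ≠ 0 := by
      intro h
      exact hx (by simp [hψdef, h])
    exact (hLsub (interior_subset (hφsupp x hφx))).1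
  · have key : ∀ x, ‖(star (ofCS ψ hψcont hψsupp) * a * (ofCS ψ hψcont hψsupp)
        - a.comp T.symm.toCocompactMap) x‖ ≤ ε/2 := by
      intro x
      have hval : (star (ofCS ψ hψcont hψsupp) * a * (ofCS ψ hψcont hψsupp)
          - a.comp T.symm.toCocompactMap) x
          = ((ψ x * ψ x * (a x).re - (a (T.symm x)).re : ℝ) : ℂ) := by
        simp [ZeroAtInftyContinuousMap.coe_sub, ZeroAtInftyContinuousMap.coe_mul,
          ZeroAtInftyContinuousMap.coe_star]
        rw [haeq x, haeq (T.symm x)]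
        push_cast
        simp only [Complex.ofReal_re]
        ring
      rw [hval, Complex.norm_real, Real.norm_eq_abs]
      have hs : 0 ≤ (a (T.symm x)).re := hare _
      by_cases hxA : x ∈ ⇑T '' K
      · have hφx : φ x = 1 := hφA hxA
        have hr : 0 < (a x).re := (hLsub (interior_subset (hAint hxA))).2
        have heq : ψ x * ψ x * (a x).re = (a (T.symm x)).re := by
          simp only [hψdef, hφx, one_mul]
          rw [Real.mul_self_sqrt (div_nonneg hs hr.le), div_mul_cancel₀ _ hr.ne']
        rw [heq]
        simp only [sub_self, abs_zero]
        linarith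
      · have hyK : T.symm x ∉ K := fun h => hxA ⟨T.symm x, h, T.apply_symm_apply x⟩
        have hs2 : (a (T.symm x)).re < ε/2 := not_le.1 hyK
        by_cases hxL : x ∈ L
        · have hr : 0 < (a x).re := (hLsub hxL).2
          have hq : Real.sqrt ((a (T.symm x)).re / (a x).re)
              * Real.sqrt ((a (T.symm x)).re / (a x).re) = (a (T.symm x)).re / (a x).re :=
            Real.mul_self_sqrt (div_nonneg hs hr.le)
          have heq : ψ x * ψ x * (a x).re = (φ x * φ x) * (a (T.symm x)).re := by
            simp only [hψdef]
            calc φ x * Real.sqrt ((a (T.symm x)).re / (a x).re)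
                  * (φ x * Real.sqrt ((a (T.symm x)).re / (a x).re)) * (a x).re
                = (φ x * φ x) * (Real.sqrt ((a (T.symm x)).re / (a x).re)
                    * Real.sqrt ((a (T.symm x)).re / (a x).re)) * (a x).re := by ring
              _ = (φ x * φ x) * ((a (T.symm x)).re / (a x).re) * (a x).re := by rw [hq]
              _ = (φ x * φ x) * (a (T.symm x)).re := by
                    rw [mul_assoc, div_mul_cancel₀ _ hr.ne']
          rw [heq]
          have h0 : 0 ≤ φ x := (hφ01 x).1
          have h1 : φ x ≤ 1 := (hφ01 x).2
          rw [abs_le]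
          constructor <;> nlinarith [mul_nonneg (mul_nonneg h0 h0) hs,
            mul_nonneg (mul_nonneg (sub_nonneg.2 h1) (by linarith : (0:ℝ) ≤ 1 + φ x)) hs]
        · have hφx : φ x = 0 := hφt fun h => hxL (interior_subset h)
          have hψx : ψ x = 0 := by simp [hψdef, hφx]
          rw [hψx, zero_mul, zero_mul, zero_sub, abs_neg, abs_of_nonneg hs]
          linarith
    have := c0_norm_le _ (by positivity : (0:ℝ) ≤ ε/2) key
    linarith

lemma c0_apply_le (f : ZeroAtInftyContinuousMap X ℂ) (x : X) : ‖f x‖ ≤ ‖f‖ := by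
  rw [← ZeroAtInftyContinuousMap.norm_toBCF_eq_norm]
  exact BoundedContinuousFunction.norm_coe_le_norm f.toBCF x

lemma fwd_aux (f : X → ℝ) (hf : Continuous f) (hfc : HasCompactSupport f)
    (hf1 : ∀ x, f x ≤ 1)
    (d : ZeroAtInftyContinuousMap X ℂ) (T : X ≃ₜ X)
    (H : ‖star d * (ofCS f hf hfc) * d - (ofCS f hf hfc).comp T.symm.toCocompactMap‖ < 1/2)
    (z : X) (hz : f z = 1) :
    0 < f (T z) ∧ 1/2 < Complex.normSq (d (T z)) := by
  have hnorm : ‖(star d * (ofCS f hf hfc) * d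
      - (ofCS f hf hfc).comp T.symm.toCocompactMap) (T z)‖ < 1/2 :=
    lt_of_le_of_lt (c0_apply_le _ _) H
  have hval : (star d * (ofCS f hf hfc) * d - (ofCS f hf hfc).comp T.symm.toCocompactMap) (T z)
      = ((Complex.normSq (d (T z)) * f (T z) - 1 : ℝ) : ℂ) := by
    simp [ZeroAtInftyContinuousMap.coe_sub, ZeroAtInftyContinuousMap.coe_mul,
      ZeroAtInftyContinuousMap.coe_star, T.symm_apply_apply, hz]
    rw [show (starRingEnd ℂ) (d (T z)) * ((f (T z) : ℝ) : ℂ) * d (T z)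
        = ((f (T z) : ℝ) : ℂ) * (d (T z) * (starRingEnd ℂ) (d (T z))) from by ring,
      Complex.mul_conj, mul_comm]
  rw [hval, Complex.norm_real, Real.norm_eq_abs, abs_lt] at hnorm
  have hkey : 1/2 < Complex.normSq (d (T z)) * f (T z) := by linarith
  have hnsq : 0 ≤ Complex.normSq (d (T z)) := Complex.normSq_nonneg _
  constructor
  · by_contra hle
    push_neg at hle
    nlinarith
  · nlinarith [hf1 (T z)]

end Stmt4Aux

/-- For a discrete group `G` acting by homeomorphisms `α` on a locally compact
Hausdorff space `X`, the induced action `σ_g f = f ∘ α_{g}⁻¹` on `C₀(X)` is `G`-separating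
iff the action is topologically `G`-separating. -/
theorem stmt4 {X G : Type*} [TopologicalSpace X] [LocallyCompactSpace X] [T2Space X] [Group G]
    (α : G → X ≃ₜ X) (hα : ∀ g h x, α (g * h) x = α g (α h x)) :
    (∀ a b c : ZeroAtInftyContinuousMap X ℂ, (∀ x, 0 ≤ a x) → (∀ x, 0 ≤ b x) →
      ∀ ε : ℝ, 0 < ε →
        ∃ (d₁ d₂ : ZeroAtInftyContinuousMap X ℂ) (g₁ g₂ : G),
          ‖star d₁ * a * d₁ - a.comp (α g₁).symm.toCocompactMap‖ < ε ∧
          ‖star d₂ * b * d₂ - b.comp (α g₂).symm.toCocompactMap‖ < ε ∧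
          ‖star d₁ * c * d₂‖ < ε) ↔
    (∀ U₁ U₂ : Set X, IsOpen U₁ → IsOpen U₂ → ∀ K₁ K₂ : Set X, IsCompact K₁ → IsCompact K₂ →
      K₁ ⊆ U₁ → K₂ ⊆ U₂ →
        ∃ g₁ g₂ : G, ⇑(α g₁) '' K₁ ⊆ U₁ ∧ ⇑(α g₂) '' K₂ ⊆ U₂ ∧
          (⇑(α g₁) '' K₁) ∩ (⇑(α g₂) '' K₂) = ∅) := by
  constructor
  · -- C*-separating → topologically separating
    intro h U₁ U₂ hU₁ hU₂ K₁ K₂ hK₁ hK₂ hKU₁ hKU₂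
    obtain ⟨L₁, hL₁c, hKL₁, hL₁U⟩ := exists_compact_between hK₁ hU₁ hKU₁
    obtain ⟨L₂, hL₂c, hKL₂, hL₂U⟩ := exists_compact_between hK₂ hU₂ hKU₂
    obtain ⟨f₁, hf₁K, hf₁t, hf₁c, hf₁01⟩ := exists_continuous_one_zero_of_isCompact hK₁
      isOpen_interior.isClosed_compl (disjoint_compl_right_iff_subset.mpr hKL₁)
    obtain ⟨f₂, hf₂K, hf₂t, hf₂c, hf₂01⟩ := exists_continuous_one_zero_of_isCompact hK₂
      isOpen_interior.isClosed_compl (disjoint_compl_right_iff_subset.mpr hKL₂)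
    obtain ⟨f₃, hf₃K, -, hf₃c, hf₃01⟩ := exists_continuous_one_zero_of_isCompact
      (hL₁c.union hL₂c) isClosed_empty (disjoint_empty _)
    obtain ⟨d₁, d₂, g₁, g₂, H1, H2, H3⟩ := h (ofCS f₁ (map_continuous f₁) hf₁c)
      (ofCS f₂ (map_continuous f₂) hf₂c) (ofCS f₃ (map_continuous f₃) hf₃c)
      (fun x => Complex.zero_le_real.2 (hf₁01 x).1)
      (fun x => Complex.zero_le_real.2 (hf₂01 x).1) (1/2) (by norm_num)
    have key₁ : ∀ z ∈ K₁, α g₁ z ∈ interior L₁ ∧ 1/2 < Complex.normSq (d₁ (α g₁ z)) := by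
      intro z hz
      obtain ⟨hpos, hsq⟩ := fwd_aux f₁ (map_continuous f₁) hf₁c (fun x => (hf₁01 x).2)
        d₁ (α g₁) H1 z (hf₁K hz)
      refine ⟨?_, hsq⟩
      by_contra hx
      exact absurd (hf₁t hx) (by simpa using hpos.ne')
    have key₂ : ∀ z ∈ K₂, α g₂ z ∈ interior L₂ ∧ 1/2 < Complex.normSq (d₂ (α g₂ z)) := by
      intro z hz
      obtain ⟨hpos, hsq⟩ := fwd_aux f₂ (map_continuous f₂) hf₂c (fun x => (hf₂01 x).2)
        d₂ (α g₂) H2 z (hf₂K hz)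
      refine ⟨?_, hsq⟩
      by_contra hx
      exact absurd (hf₂t hx) (by simpa using hpos.ne')
    refine ⟨g₁, g₂, ?_, ?_, ?_⟩
    · rintro x ⟨z, hz, rfl⟩
      exact hL₁U (interior_subset (key₁ z hz).1)
    · rintro x ⟨z, hz, rfl⟩
      exact hL₂U (interior_subset (key₂ z hz).1)
    · rw [Set.eq_empty_iff_forall_notMem]
      rintro x ⟨⟨z₁, hz₁, he₁⟩, ⟨z₂, hz₂, he₂⟩⟩
      have k₁ := key₁ z₁ hz₁; rw [he₁] at k₁
      have k₂ := key₂ z₂ hz₂; rw [he₂] at k₂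
      have hc : f₃ x = 1 := hf₃K (Set.mem_union_left _ (interior_subset k₁.1))
      have hval : (star d₁ * (ofCS f₃ (map_continuous f₃) hf₃c) * d₂) x
          = (starRingEnd ℂ) (d₁ x) * d₂ x := by
        simp [ZeroAtInftyContinuousMap.coe_mul, ZeroAtInftyContinuousMap.coe_star, hc]
      have hle : ‖(star d₁ * (ofCS f₃ (map_continuous f₃) hf₃c) * d₂) x‖ < 1/2 :=
        lt_of_le_of_lt (c0_apply_le _ _) H3
      rw [hval] at hle
      have hn : ‖(starRingEnd ℂ) (d₁ x) * d₂ x‖ = ‖d₁ x‖ * ‖d₂ x‖ := by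
        rw [norm_mul, RCLike.norm_conj]
      rw [hn] at hle
      have hs₁ : 1/2 < ‖d₁ x‖^2 := by
        have := k₁.2; rwa [Complex.normSq_eq_norm_sq] at this
      have hs₂ : 1/2 < ‖d₂ x‖^2 := by
        have := k₂.2; rwa [Complex.normSq_eq_norm_sq] at this
      have h4 : (1/2:ℝ)^2 < (‖d₁ x‖ * ‖d₂ x‖)^2 := by
        rw [mul_pow]
        nlinarith [norm_nonneg (d₁ x), norm_nonneg (d₂ x)]
      have := lt_of_pow_lt_pow_left₀ 2 (by positivity) h4
      linarith
  · -- topologically separating → C*-separating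
    intro h a b c ha hb ε hε
    have hUa : IsOpen {x | 0 < (a x).re} :=
      isOpen_lt continuous_const (Complex.continuous_re.comp (map_continuous a))
    have hUb : IsOpen {x | 0 < (b x).re} :=
      isOpen_lt continuous_const (Complex.continuous_re.comp (map_continuous b))
    obtain ⟨g₁, g₂, hg₁, hg₂, hdisj⟩ := h _ _ hUa hUb
      {x | ε/2 ≤ (a x).re} {x | ε/2 ≤ (b x).re}
      (isCompact_superlevel a (half_pos hε)) (isCompact_superlevel b (half_pos hε))
      (fun x hx => lt_of_lt_of_le (half_pos hε) hx)
      (fun x hx => lt_of_lt_of_le (half_pos hε) hx)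
    obtain ⟨W₁, W₂, hW₁, hW₂, hAW₁, hAW₂, hWd⟩ := SeparatedNhds.of_isCompact_isCompact
      ((isCompact_superlevel a (half_pos hε)).image (α g₁).continuous)
      ((isCompact_superlevel b (half_pos hε)).image (α g₂).continuous)
      (Set.disjoint_iff_inter_eq_empty.2 hdisj)
    obtain ⟨d₁, hd₁W, hd₁⟩ := exists_d a ha hε (α g₁) W₁ hW₁ (Set.subset_inter hAW₁ hg₁)
    obtain ⟨d₂, hd₂W, hd₂⟩ := exists_d b hb hε (α g₂) W₂ hW₂ (Set.subset_inter hAW₂ hg₂)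
    refine ⟨d₁, d₂, g₁, g₂, hd₁, hd₂, ?_⟩
    have key : ∀ x, ‖(star d₁ * c * d₂) x‖ ≤ 0 := by
      intro x
      have hval : (star d₁ * c * d₂) x = (starRingEnd ℂ) (d₁ x) * c x * d₂ x := by
        simp [ZeroAtInftyContinuousMap.coe_mul, ZeroAtInftyContinuousMap.coe_star]
      by_cases hx : d₂ x = 0
      · simp [hval, hx]
      · have hd₁x : d₁ x = 0 := by
          by_contra h0
          exact Set.disjoint_left.1 hWd (hd₁W x h0) (hd₂W x hx)
        simp [hval, hd₁x]
    exact lt_of_le_of_lt (c0_norm_le _ le_rfl key) hε
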